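/- Let X be an M × N complex matrix with unit-norm columns, Π ⊂ {1,…,N} with |Π| = K and complement Π^c, and suppose X satisfies: for a given vector z ∈ ℂ^K, ‖(X_Πᴴ X_Π − I_K)z‖_∞ ≤ ε‖z‖₂ and ‖X_{Π^c}ᴴ X_Π z‖_∞ ≤ ε‖z‖₂. Let y = X_Π z + w with ‖Xᴴ w‖_∞ ≤ τ. If ‖z‖_∞ − 2ε‖z‖₂ > 2τ, then max_{n ∈ Π} |x_nᴴ y| > max_{n ∉ Π} |x_nᴴ y|. -/

import Mathlib

/-- Inner product between columns `n` and `m` of `X`. -/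
noncomputable def colIP {M N : ℕ} (X : Matrix (Fin M) (Fin N) ℂ) (n m : Fin N) : ℂ :=
  ∑ i, (starRingEnd ℂ) (X i n) * X i m

/-- Correlation of column `n` of `X` with a vector `v`. -/
noncomputable def colDot {M N : ℕ} (X : Matrix (Fin M) (Fin N) ℂ) (n : Fin N)
    (v : Fin M → ℂ) : ℂ :=
  ∑ i, (starRingEnd ℂ) (X i n) * v i

lemma colDot_decomp {M N K : ℕ} (X : Matrix (Fin M) (Fin N) ℂ)
    (e : Fin K → Fin N) (z : Fin K → ℂ) (w : Fin M → ℂ) (n : Fin N) :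
    colDot X n (fun i => (∑ l, X i (e l) * z l) + w i) =
      (∑ l, colIP X n (e l) * z l) + colDot X n w := by
  simp only [colDot, colIP, mul_add, Finset.sum_add_distrib, Finset.mul_sum,
    Finset.sum_mul]
  congr 1
  rw [Finset.sum_comm]
  apply Finset.sum_congr rfl
  intro i _
  apply Finset.sum_congr rfl
  intro l _
  ring

theorem support_identification {M N K : ℕ}
    (X : Matrix (Fin M) (Fin N) ℂ)
    (hnorm : ∀ n, ∑ i, ‖X i n‖ ^ 2 = 1)
    (ε τ : ℝ)
    (e : Fin K → Fin N) (he : Function.Injective e)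
    (z : Fin K → ℂ) (w y : Fin M → ℂ)
    (hy : y = fun i => (∑ l, X i (e l) * z l) + w i)
    (hstoc1 : ∀ j : Fin K,
      ‖(∑ l, colIP X (e j) (e l) * z l) - z j‖ ≤
        ε * Real.sqrt (∑ l, ‖z l‖ ^ 2))
    (hstoc2 : ∀ n : Fin N, n ∉ Set.range e →
      ‖∑ l, colIP X n (e l) * z l‖ ≤
        ε * Real.sqrt (∑ l, ‖z l‖ ^ 2))
    (hw : ∀ n : Fin N, ‖colDot X n w‖ ≤ τ)
    (hu : (Finset.univ : Finset (Fin K)).Nonempty)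
    (hsep : Finset.sup' Finset.univ hu (fun j => ‖z j‖) -
        2 * ε * Real.sqrt (∑ l, ‖z l‖ ^ 2) > 2 * τ) :
    ∀ n : Fin N, n ∉ Set.range e →
      Finset.sup' Finset.univ hu (fun j => ‖colDot X (e j) y‖) >
        ‖colDot X n y‖ := by
  intro n hn
  set S := Real.sqrt (∑ l, ‖z l‖ ^ 2) with hS
  -- pick j attaining sup of |z j|
  obtain ⟨j, _, hj⟩ := Finset.exists_mem_eq_sup' hu (fun j => ‖z j‖)
  have hyd : ∀ m : Fin N, colDot X m y =
      (∑ l, colIP X m (e l) * z l) + colDot X m w := by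
    intro m; rw [hy]; exact colDot_decomp X e z w m
  -- lower bound for j
  have hlow : ‖z j‖ - ε * S - τ ≤ ‖colDot X (e j) y‖ := by
    have h1 := hstoc1 j
    have h2 := hw (e j)
    have : colDot X (e j) y = z j + (((∑ l, colIP X (e j) (e l) * z l) - z j)
        + colDot X (e j) w) := by rw [hyd]; ring
    rw [this]
    have htri : ‖z j‖ ≤
        ‖z j + (((∑ l, colIP X (e j) (e l) * z l) - z j) + colDot X (e j) w)‖
        + ‖((∑ l, colIP X (e j) (e l) * z l) - z j) + colDot X (e j) w‖ := by
      calc ‖z j‖ = ‖(z j + (((∑ l, colIP X (e j) (e l) * z l) - z j)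
            + colDot X (e j) w)) - (((∑ l, colIP X (e j) (e l) * z l) - z j)
            + colDot X (e j) w)‖ := by ring_nf
        _ ≤ _ := by
            apply (norm_sub_le _ _).trans; exact le_refl _
    have habs : ‖((∑ l, colIP X (e j) (e l) * z l) - z j) + colDot X (e j) w‖
        ≤ ε * S + τ := (norm_add_le _ _).trans (add_le_add h1 h2)
    linarith
  -- upper bound for n
  have hup : ‖colDot X n y‖ ≤ ε * S + τ := by
    rw [hyd]
    exact (norm_add_le _ _).trans (add_le_add (hstoc2 n hn) (hw n))
  have hsup : ‖colDot X (e j) y‖ ≤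
      Finset.sup' Finset.univ hu (fun j => ‖colDot X (e j) y‖) :=
    Finset.le_sup' (fun j => ‖colDot X (e j) y‖) (Finset.mem_univ j)
  rw [hj] at hsep
  linarith
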